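/- For each t ∈ {0,1,…,T} and each x ∈ ℕ, the single-system value function Ṽ_t(x,k) is non-decreasing in the cumulative observed deterioration k: if k ≤ k' then Ṽ_t(x,k) ≤ Ṽ_t(x,k'). -/

import Mathlib

open Filter

/-- Negative Binomial pmf with real shape `r` and success probability `p`:
`NB(r,p)(z) = Γ(z+r)/(Γ(r)·z!)·p^r·(1−p)^z` for `r > 0`, and `NB(0,p)` is
the point mass at `0`. -/
noncomputable def NB (r p : ℝ) (z : ℕ) : ℝ :=
  if r = 0 then (if z = 0 then (1 : ℝ) else 0)
  else Real.Gamma ((z : ℝ) + r) / (Real.Gamma r * (Nat.factorial z : ℝ)) * p ^ r * (1 - p) ^ z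

/-- `p_t = (β0 + N·t)/(β0 + N·t + 1)`. -/
noncomputable def pt (β0 : ℝ) (N t : ℕ) : ℝ :=
  (β0 + (N : ℝ) * (t : ℝ)) / (β0 + (N : ℝ) * (t : ℝ) + 1)

/-- Expectation `E_{(Z,K)}[f(Z,K)]` with `Z ~ NB(α0+k, p_t)` and
`K ~ NB((N−1)(α0+k), p_t)` independent. -/
noncomputable def EZK (α0 β0 : ℝ) (N t k : ℕ) (f : ℕ → ℕ → ℝ) : ℝ :=
  ∑' z : ℕ, ∑' κ : ℕ,
    NB (α0 + (k : ℝ)) (pt β0 N t) z * NB (((N : ℝ) - 1) * (α0 + (k : ℝ))) (pt β0 N t) κ * f z κ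

noncomputable def gg (r : ℝ) (z : ℕ) : ℝ :=
  (∏ i ∈ Finset.range z, (r + i)) / (Nat.factorial z : ℝ)

lemma Gamma_ratio (r : ℝ) (hr : 0 < r) (z : ℕ) :
    Real.Gamma ((z : ℝ) + r) = (∏ i ∈ Finset.range z, (r + i)) * Real.Gamma r := by
  induction z with
  | zero => simp
  | succ n ih =>
      have hne : (n : ℝ) + r ≠ 0 := by positivity
      have : ((n + 1 : ℕ) : ℝ) + r = ((n : ℝ) + r) + 1 := by push_cast; ring
      rw [this, Real.Gamma_add_one hne, ih, Finset.prod_range_succ]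
      ring

lemma NB_eq (r p : ℝ) (hr : 0 < r) (z : ℕ) :
    NB r p z = gg r z * p ^ r * (1 - p) ^ z := by
  have h0 : Real.Gamma r ≠ 0 := (Real.Gamma_pos_of_pos hr).ne'
  rw [NB, if_neg hr.ne', Gamma_ratio r hr z, gg]
  field_simp

lemma gg_pos {r : ℝ} (hr : 0 < r) (z : ℕ) : 0 < gg r z := by
  apply div_pos
  · exact Finset.prod_pos fun i _ => by positivity
  · exact_mod_cast Nat.factorial_pos z

lemma NB_pos {r p : ℝ} (hr : 0 < r) (hp : 0 < p) (hp1 : p < 1) (z : ℕ) : 0 < NB r p z := by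
  rw [NB_eq r p hr]
  have h1 : (0:ℝ) < 1 - p := by linarith
  have := gg_pos hr z
  have h2 : (0:ℝ) < p ^ r := Real.rpow_pos_of_pos hp r
  positivity

lemma NB_nonneg {r p : ℝ} (hr : 0 ≤ r) (hp : 0 < p) (hp1 : p < 1) (z : ℕ) : 0 ≤ NB r p z := by
  rcases eq_or_lt_of_le hr with h | h
  · rw [NB, if_pos h.symm]
    split <;> norm_num
  · exact (NB_pos h hp hp1 z).le

lemma gg_zero (r : ℝ) : gg r 0 = 1 := by simp [gg]

lemma gg_succ (r : ℝ) (z : ℕ) :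
    gg r (z + 1) * ((z : ℝ) + 1) = gg r z * (r + z) := by
  have hf : (Nat.factorial (z+1) : ℝ) = ((z:ℝ)+1) * (Nat.factorial z : ℝ) := by
    rw [Nat.factorial_succ]; push_cast; ring
  have hz : (Nat.factorial z : ℝ) ≠ 0 := by exact_mod_cast (Nat.factorial_pos z).ne'
  have hz1 : (z:ℝ) + 1 ≠ 0 := by positivity
  rw [gg, gg, Finset.prod_range_succ, hf]
  field_simp

/-- shift identity: `(z+1) ⬝ gg r (z+1) = r ⬝ gg (r+1) z`. -/
lemma gg_shift (r : ℝ) (z : ℕ) :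
    gg r (z + 1) * ((z : ℝ) + 1) = r * gg (r + 1) z := by
  have hprod : (∏ i ∈ Finset.range (z+1), (r + i)) = r * ∏ i ∈ Finset.range z, (r + 1 + i) := by
    rw [Finset.prod_range_succ']
    simp only [Nat.cast_zero, add_zero]
    rw [mul_comm]
    congr 1
    apply Finset.prod_congr rfl
    intro i _
    push_cast; ring
  have hf : (Nat.factorial (z+1) : ℝ) = ((z:ℝ)+1) * (Nat.factorial z : ℝ) := by
    rw [Nat.factorial_succ]; push_cast; ring
  have hz : (Nat.factorial z : ℝ) ≠ 0 := by exact_mod_cast (Nat.factorial_pos z).ne'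
  have hz1 : (z:ℝ) + 1 ≠ 0 := by positivity
  rw [gg, gg, hprod, hf]
  field_simp

/-- Chu–Vandermonde identity for rising-factorial binomial coefficients. -/
lemma gg_vandermonde : ∀ z : ℕ, ∀ r δ : ℝ, 0 < r → 0 < δ →
    (∑ i ∈ Finset.range (z + 1), gg r i * gg δ (z - i)) = gg (r + δ) z := by
  intro z
  induction z with
  | zero => intro r δ _ _; simp [gg_zero]
  | succ n ih =>
      intro r δ hr hδ
      have key : (∑ i ∈ Finset.range (n + 2), gg r i * gg δ (n + 1 - i)) * ((n:ℝ) + 1)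
          = gg (r + δ) (n + 1) * ((n:ℝ) + 1) := by
        rw [Finset.sum_mul]
        have step : ∀ i ∈ Finset.range (n+2), gg r i * gg δ (n+1-i) * ((n:ℝ)+1)
            = (i:ℝ) * gg r i * gg δ (n+1-i)
              + gg r i * (((n+1-i : ℕ)):ℝ) * gg δ (n+1-i) := by
          intro i hi
          have hi' : i ≤ n+1 := Nat.lt_succ_iff.mp (Finset.mem_range.mp hi)
          have hc : ((n+1-i : ℕ):ℝ) = ((n:ℝ)+1) - i := by
            rw [Nat.cast_sub hi']; push_cast; ring
          rw [hc]; ring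
        rw [Finset.sum_congr rfl step, Finset.sum_add_distrib]
        have h1 : (∑ i ∈ Finset.range (n+2), (i:ℝ) * gg r i * gg δ (n+1-i))
            = r * gg (r+1+δ) n := by
          rw [Finset.sum_range_succ']
          simp only [Nat.cast_zero, zero_mul, add_zero]
          have e : ∀ i ∈ Finset.range (n+1), ((i+1 : ℕ):ℝ) * gg r (i+1) * gg δ (n+1-(i+1))
              = r * (gg (r+1) i * gg δ (n-i)) := by
            intro i hi
            have hsub : n+1-(i+1) = n - i := by omega
            rw [hsub]; push_cast
            linear_combination gg δ (n-i) * gg_shift r i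
          rw [Finset.sum_congr rfl e, ← Finset.mul_sum, ih (r+1) δ (by linarith) hδ]
        have h2 : (∑ i ∈ Finset.range (n+2), gg r i * (((n+1-i : ℕ)):ℝ) * gg δ (n+1-i))
            = δ * gg (r+(δ+1)) n := by
          rw [Finset.sum_range_succ]
          simp only [Nat.sub_self, Nat.cast_zero, mul_zero, zero_mul, add_zero]
          have e : ∀ i ∈ Finset.range (n+1), gg r i * (((n+1-i : ℕ)):ℝ) * gg δ (n+1-i)
              = δ * (gg r i * gg (δ+1) (n-i)) := by
            intro i hi
            have hi' : i ≤ n := Nat.lt_succ_iff.mp (Finset.mem_range.mp hi)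
            have hsub : n+1-i = (n - i) + 1 := by omega
            rw [hsub]; push_cast
            linear_combination gg r i * gg_shift δ (n-i)
          rw [Finset.sum_congr rfl e, ← Finset.mul_sum, ih r (δ+1) hr (by linarith)]
        rw [h1, h2]
        have hr1 : r + 1 + δ = r + δ + 1 := by ring
        have hr2 : r + (δ + 1) = r + δ + 1 := by ring
        rw [hr1, hr2]
        linear_combination -gg_shift (r+δ) n
      have hne : ((n:ℝ) + 1) ≠ 0 := by positivity
      exact mul_right_cancel₀ hne key

/-- pointwise convolution identity for NB pmfs. -/
lemma NB_conv {r δ p : ℝ} (hp : 0 ≤ p) (hr : 0 < r) (hδ : 0 < δ) (n : ℕ) :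
    (∑ i ∈ Finset.range (n + 1), NB r p i * NB δ p (n - i)) = NB (r + δ) p n := by
  have key : ∀ i ∈ Finset.range (n+1), NB r p i * NB δ p (n - i)
      = (gg r i * gg δ (n-i)) * (p ^ (r+δ) * (1-p)^n) := by
    intro i hi
    have hi' : i ≤ n := Nat.lt_succ_iff.mp (Finset.mem_range.mp hi)
    rw [NB_eq r p hr, NB_eq δ p hδ, Real.rpow_add_of_nonneg hp hr.le hδ.le]
    have hpow : (1-p)^i * (1-p)^(n-i) = (1-p)^n := by
      rw [← pow_add, Nat.add_sub_cancel' hi']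
    linear_combination (gg r i * gg δ (n-i) * p ^ r * p ^ δ) * hpow
  rw [Finset.sum_congr rfl key, ← Finset.sum_mul, gg_vandermonde n r δ hr hδ,
    NB_eq (r+δ) p (by linarith)]
  ring

lemma NB_succ_ratio {r p : ℝ} (hr : 0 < r) (z : ℕ) :
    NB r p (z + 1) * ((z:ℝ) + 1) = NB r p z * (r + z) * (1 - p) := by
  rw [NB_eq r p hr, NB_eq r p hr]
  have := gg_succ r z
  calc gg r (z+1) * p ^ r * (1-p)^(z+1) * ((z:ℝ)+1)
      = (gg r (z+1) * ((z:ℝ)+1)) * p ^ r * (1-p)^(z+1) := by ring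
    _ = (gg r z * (r + z)) * p ^ r * (1-p)^(z+1) := by rw [this]
    _ = gg r z * p ^ r * (1-p)^z * (r + z) * (1-p) := by rw [pow_succ]; ring

lemma NB_summable {r p : ℝ} (hp : 0 < p) (hp1 : p < 1) (hr : 0 ≤ r) :
    Summable (NB r p) := by
  rcases eq_or_lt_of_le hr with h | h
  · have : NB r p = fun z => if z = 0 then (1:ℝ) else 0 := by
      funext z; rw [NB, if_pos h.symm]
    rw [this]
    exact (hasSum_ite_eq 0 (1:ℝ)).summable
  · apply summable_of_ratio_test_tendsto_lt_one (by linarith : 1 - p < 1)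
    · exact Filter.Eventually.of_forall fun z => (NB_pos h hp hp1 z).ne'
    · have heq : ∀ z : ℕ, ‖NB r p (z+1)‖ / ‖NB r p z‖ = (r + z) / ((z:ℝ)+1) * (1-p) := by
        intro z
        have h1 := NB_pos h hp hp1 z
        have h2 := NB_pos h hp hp1 (z+1)
        rw [Real.norm_eq_abs, Real.norm_eq_abs, abs_of_pos h1, abs_of_pos h2]
        have hz1 : ((z:ℝ)+1) ≠ 0 := by positivity
        field_simp
        linear_combination NB_succ_ratio (p := p) h z
      simp_rw [heq]
      have key : Filter.Tendsto (fun z : ℕ => (r + z) / ((z:ℝ)+1)) Filter.atTop (nhds 1) := by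
        have : (fun z : ℕ => (r + z) / ((z:ℝ)+1)) = fun z : ℕ => 1 + (r - 1) * (1/((z:ℝ)+1)) := by
          funext z
          have hz1 : ((z:ℝ)+1) ≠ 0 := by positivity
          field_simp
          ring
        rw [this]
        have h0 := tendsto_one_div_add_atTop_nhds_zero_nat (𝕜 := ℝ)
        have := h0.const_mul (r - 1)
        have := this.const_add 1
        simpa using this
      have := key.mul_const (1 - p)
      simpa using this

lemma NB_mass_nat {p : ℝ} (hp : 0 < p) (hp1 : p < 1) :
    ∀ d : ℕ, 0 < d → HasSum (NB (d:ℝ) p) 1 := by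
  have hgeo : HasSum (fun z : ℕ => p * (1-p)^z) 1 := by
    have h := hasSum_geometric_of_lt_one (by linarith : (0:ℝ) ≤ 1 - p) (by linarith : 1 - p < 1)
    have := h.mul_left p
    rw [show (1:ℝ) - (1 - p) = p by ring, mul_inv_cancel₀ hp.ne'] at this
    exact this
  have hone : NB (1:ℝ) p = fun z => p * (1-p)^z := by
    funext z
    rw [NB_eq 1 p one_pos]
    have hgg : gg 1 z = 1 := by
      rw [gg]
      have : (∏ i ∈ Finset.range z, ((1:ℝ) + i)) = (Nat.factorial z : ℝ) := by
        rw [← Finset.prod_range_add_one_eq_factorial z]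
        push_cast
        exact Finset.prod_congr rfl fun i _ => by ring
      rw [this]
      field_simp
    rw [hgg, Real.rpow_one]; ring
  intro d hd
  induction d with
  | zero => omega
  | succ n ih =>
      rcases Nat.eq_zero_or_pos n with h0 | hn
      · subst h0; simpa [hone] using hgeo
      · have ihn := ih hn
        have h1 : HasSum (NB (1:ℝ) p) 1 := by rw [hone]; exact hgeo
        have hs2 : Summable fun x : ℕ × ℕ => NB (n:ℝ) p x.1 * NB (1:ℝ) p x.2 :=
          Summable.mul_of_nonneg ihn.summable h1.summable
            (fun z => NB_nonneg (by positivity) hp hp1 z)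
            (fun z => NB_nonneg (by norm_num) hp hp1 z)
        have key := Summable.tsum_mul_tsum_eq_tsum_sum_range ihn.summable h1.summable hs2
        rw [ihn.tsum_eq, h1.tsum_eq] at key
        have hconv : ∀ n' : ℕ, (∑ k ∈ Finset.range (n'+1), NB (n:ℝ) p k * NB (1:ℝ) p (n'-k))
            = NB ((n:ℝ)+1) p n' := fun n' =>
          NB_conv hp.le (by exact_mod_cast hn) one_pos n'
        simp_rw [hconv] at key
        have hsummable : Summable (NB (((n+1:ℕ)):ℝ) p) := NB_summable hp hp1 (by positivity)
        rw [hsummable.hasSum_iff]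
        push_cast
        rw [← key]
        norm_num

lemma gg_mono_left {r s : ℝ} (hr : 0 < r) (hrs : r ≤ s) (z : ℕ) : gg r z ≤ gg s z := by
  rw [gg, gg]
  gcongr

lemma NB_mass_le {r p : ℝ} (hp : 0 < p) (hp1 : p < 1) (hr : 0 < r) :
    ∑' z, NB r p z ≤ p⁻¹ := by
  set n : ℕ := ⌈r⌉₊ with hn
  have hrn : r ≤ (n:ℝ) := Nat.le_ceil r
  have hn1 : (n:ℝ) < r + 1 := by
    have := Nat.ceil_lt_add_one (le_of_lt hr)
    exact_mod_cast this
  have hnpos : 0 < n := by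
    rw [hn]; exact Nat.ceil_pos.mpr hr
  have hpr : (0:ℝ) < p ^ (r - (n:ℝ)) := Real.rpow_pos_of_pos hp _
  have hle : ∀ z, NB r p z ≤ p ^ (r - (n:ℝ)) * NB (n:ℝ) p z := by
    intro z
    rw [NB_eq r p hr, NB_eq (n:ℝ) p (by exact_mod_cast hnpos)]
    have h1 : gg r z ≤ gg (n:ℝ) z := gg_mono_left hr hrn z
    have h2 : p ^ r = p ^ (r - (n:ℝ)) * p ^ ((n:ℝ)) := by
      rw [← Real.rpow_add hp]; congr 1; ring
    rw [h2]
    have h3 : (0:ℝ) ≤ (1-p)^z := pow_nonneg (by linarith) z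
    have h4 : (0:ℝ) < p ^ ((n:ℝ)) := Real.rpow_pos_of_pos hp _
    have key := mul_le_mul_of_nonneg_right h1
      (mul_nonneg (mul_nonneg hpr.le h4.le) h3)
    nlinarith [key]
  have hsum := NB_summable hp hp1 hr.le
  have hsumn := NB_summable hp hp1 (Nat.cast_nonneg n)
  calc ∑' z, NB r p z ≤ ∑' z, p ^ (r - (n:ℝ)) * NB (n:ℝ) p z :=
        Summable.tsum_le_tsum hle hsum (hsumn.mul_left _)
    _ = p ^ (r - (n:ℝ)) * ∑' z, NB (n:ℝ) p z := tsum_mul_left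
    _ = p ^ (r - (n:ℝ)) := by rw [(NB_mass_nat hp hp1 n hnpos).tsum_eq, mul_one]
    _ ≤ p ^ (-1 : ℝ) := Real.rpow_le_rpow_of_exponent_ge hp hp1.le (by linarith)
    _ = p⁻¹ := Real.rpow_neg_one p

/-- mass is 1 for positive-natural-valued shapes, stated for reals. -/
lemma NB_tsum_one {r p : ℝ} (hp : 0 < p) (hp1 : p < 1) (d : ℕ) (hd : 0 < d) (hrd : r = (d:ℝ)) :
    ∑' z, NB r p z = 1 := by
  subst hrd
  exact (NB_mass_nat hp hp1 d hd).tsum_eq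

lemma tsum_prod_antidiag (F : ℕ × ℕ → ℝ) (hF : Summable F) :
    (∑' x : ℕ × ℕ, F x) = ∑' n, ∑ kl ∈ Finset.HasAntidiagonal.antidiagonal n, F kl := by
  conv_rhs => congr; ext; rw [← Finset.sum_finset_coe, ← tsum_fintype (L := SummationFilter.unconditional _)]
  rw [← Finset.HasAntidiagonal.sigmaAntidiagonalEquivProd.tsum_eq F]
  exact Summable.tsum_sigma' (fun n => (hasSum_fintype _).summable)
    (Finset.HasAntidiagonal.sigmaAntidiagonalEquivProd.summable_iff.mpr hF)

/-- Stochastic dominance: expectation of a bounded monotone function increases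
when the NB shape increases by a positive natural number. -/
lemma NB_dominance {p : ℝ} (hp : 0 < p) (hp1 : p < 1) {r : ℝ} (hr : 0 < r) (d : ℕ)
    {M : ℝ} (h : ℕ → ℝ) (h0 : ∀ z, 0 ≤ h z) (hM : ∀ z, h z ≤ M)
    (hmono : ∀ i j, i ≤ j → h i ≤ h j) :
    ∑' z, NB r p z * h z ≤ ∑' z, NB (r + (d:ℝ)) p z * h z := by
  rcases Nat.eq_zero_or_pos d with h0d | hd
  · subst h0d; simp
  set u := NB r p with hu_def
  set v := NB ((d:ℕ):ℝ) p with hv_def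
  have hδpos : (0:ℝ) < (d:ℝ) := by exact_mod_cast hd
  have hu : Summable u := NB_summable hp hp1 hr.le
  have hv1 : HasSum v 1 := NB_mass_nat hp hp1 d hd
  have hv : Summable v := hv1.summable
  have hunn : ∀ z, 0 ≤ u z := fun z => NB_nonneg hr.le hp hp1 z
  have hvnn : ∀ z, 0 ≤ v z := fun z => NB_nonneg hδpos.le hp hp1 z
  have hs2 : Summable (fun x : ℕ × ℕ => u x.1 * v x.2) :=
    Summable.mul_of_nonneg hu hv hunn hvnn
  have hGle : ∀ (x : ℕ × ℕ) (w : ℕ), u x.1 * v x.2 * h w ≤ u x.1 * v x.2 * M :=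
    fun x w => mul_le_mul_of_nonneg_left (hM w) (mul_nonneg (hunn _) (hvnn _))
  have hGnn : ∀ (x : ℕ × ℕ) (w : ℕ), 0 ≤ u x.1 * v x.2 * h w :=
    fun x w => mul_nonneg (mul_nonneg (hunn _) (hvnn _)) (h0 w)
  have hG : Summable (fun x : ℕ × ℕ => u x.1 * v x.2 * h (x.1 + x.2)) :=
    Summable.of_nonneg_of_le (fun x => hGnn x _) (fun x => hGle x _) (hs2.mul_right M)
  have hG1 : Summable (fun x : ℕ × ℕ => u x.1 * v x.2 * h x.1) :=
    Summable.of_nonneg_of_le (fun x => hGnn x _) (fun x => hGle x _) (hs2.mul_right M)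
  -- Step A : RHS as a double sum over pairs
  have stepA : (∑' z, NB (r + (d:ℝ)) p z * h z)
      = ∑' x : ℕ × ℕ, u x.1 * v x.2 * h (x.1 + x.2) := by
    rw [tsum_prod_antidiag _ hG]
    apply tsum_congr
    intro n
    have hterm : ∀ kl ∈ Finset.HasAntidiagonal.antidiagonal n, u kl.1 * v kl.2 * h (kl.1 + kl.2)
        = u kl.1 * v kl.2 * h n := by
      intro kl hkl
      rw [Finset.HasAntidiagonal.mem_antidiagonal.mp hkl]
    rw [Finset.sum_congr rfl hterm, ← Finset.sum_mul,
      Finset.Nat.sum_antidiagonal_eq_sum_range_succ_mk, NB_conv hp.le hr hδpos n]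
  -- Step B : LHS as a double sum over pairs
  have stepB : (∑' z, NB r p z * h z) = ∑' x : ℕ × ℕ, u x.1 * v x.2 * h x.1 := by
    have hfh : Summable (fun z => u z * h z) :=
      Summable.of_nonneg_of_le (fun z => mul_nonneg (hunn z) (h0 z))
        (fun z => mul_le_mul_of_nonneg_left (hM z) (hunn z)) (hu.mul_right M)
    have hfg : Summable (fun x : ℕ × ℕ => (u x.1 * h x.1) * v x.2) := by
      apply Summable.of_nonneg_of_le
        (fun x => mul_nonneg (mul_nonneg (hunn _) (h0 _)) (hvnn _))
        (fun x => ?_) (hs2.mul_right M)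
      calc u x.1 * h x.1 * v x.2 = u x.1 * v x.2 * h x.1 := by ring
        _ ≤ u x.1 * v x.2 * M := hGle x _
    have := Summable.tsum_mul_tsum hfh hv hfg
    rw [hv1.tsum_eq, mul_one] at this
    rw [this]
    apply tsum_congr
    intro x
    ring
  rw [stepA, stepB]
  apply Summable.tsum_le_tsum ?_ hG1 hG
  intro x
  exact mul_le_mul_of_nonneg_left (hmono x.1 (x.1 + x.2) le_self_add)
    (mul_nonneg (hunn _) (hvnn _))

lemma NB_zero (p : ℝ) (κ : ℕ) : NB 0 p κ = if κ = 0 then (1:ℝ) else 0 := by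
  rw [NB, if_pos rfl]

lemma NB_zero_tsum (p : ℝ) (f : ℕ → ℝ) : ∑' κ, NB 0 p κ * f κ = f 0 := by
  have : ∀ κ, NB 0 p κ * f κ = if κ = 0 then f 0 else 0 := by
    intro κ
    rw [NB_zero]
    by_cases h : κ = 0 <;> simp [h]
  simp_rw [this]
  exact tsum_ite_eq 0 (fun _ => f 0)

lemma NB_zero_mass (p : ℝ) : ∑' κ, NB 0 p κ = 1 := by
  have := NB_zero_tsum p (fun _ => 1)
  simpa using this

lemma NB_mass_le' {b p : ℝ} (hp : 0 < p) (hp1 : p < 1) (hb : 0 ≤ b) :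
    ∑' z, NB b p z ≤ p⁻¹ := by
  have hp1' : (1:ℝ) ≤ p⁻¹ := by
    rw [le_inv_comm₀ one_pos hp]; simpa using hp1.le
  rcases eq_or_lt_of_le hb with h | h
  · rw [← h, NB_zero_mass]; exact hp1'
  · exact NB_mass_le hp hp1 h

section Inner

variable {p : ℝ} (hp : 0 < p) (hp1 : p < 1) {b : ℝ} (hb : 0 ≤ b)
  {M : ℝ} (g : ℕ → ℝ) (hg0 : ∀ κ, 0 ≤ g κ) (hgM : ∀ κ, g κ ≤ M)

include hp hp1 hb hg0 hgM in
lemma inner_summable : Summable (fun κ => NB b p κ * g κ) := by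
  apply Summable.of_nonneg_of_le
    (fun κ => mul_nonneg (NB_nonneg hb hp hp1 κ) (hg0 κ))
    (fun κ => mul_le_mul_of_nonneg_left (hgM κ) (NB_nonneg hb hp hp1 κ))
    ((NB_summable hp hp1 hb).mul_right M)

include hp hp1 hb hg0 in
lemma inner_nonneg : 0 ≤ ∑' κ, NB b p κ * g κ :=
  tsum_nonneg fun κ => mul_nonneg (NB_nonneg hb hp hp1 κ) (hg0 κ)

include hp hp1 hb hg0 hgM in
lemma inner_le : (∑' κ, NB b p κ * g κ) ≤ M * p⁻¹ := by
  have hM0 : 0 ≤ M := le_trans (hg0 0) (hgM 0)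
  calc (∑' κ, NB b p κ * g κ) ≤ ∑' κ, NB b p κ * M :=
        Summable.tsum_le_tsum (fun κ => mul_le_mul_of_nonneg_left (hgM κ) (NB_nonneg hb hp hp1 κ))
          (inner_summable hp hp1 hb g hg0 hgM) ((NB_summable hp hp1 hb).mul_right M)
    _ = (∑' κ, NB b p κ) * M := tsum_mul_right
    _ ≤ p⁻¹ * M := mul_le_mul_of_nonneg_right (NB_mass_le' hp hp1 hb) hM0
    _ = M * p⁻¹ := mul_comm _ _

end Inner

lemma NB_dominance2 {p : ℝ} (hp : 0 < p) (hp1 : p < 1) {a b : ℝ} (ha : 0 < a) (hb : 0 ≤ b)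
    (da db : ℕ) (hbdb : b = 0 → db = 0)
    {M : ℝ} (f f' : ℕ → ℕ → ℝ)
    (hf0 : ∀ z κ, 0 ≤ f z κ) (hff' : ∀ z κ, f z κ ≤ f' z κ)
    (hf'0 : ∀ z κ, 0 ≤ f' z κ) (hf'M : ∀ z κ, f' z κ ≤ M)
    (hmono : ∀ z z' κ κ', z ≤ z' → κ ≤ κ' → f' z κ ≤ f' z' κ') :
    (∑' z, NB a p z * ∑' κ, NB b p κ * f z κ)
      ≤ ∑' z, NB (a + (da:ℝ)) p z * ∑' κ, NB (b + (db:ℝ)) p κ * f' z κ := by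
  have hfM : ∀ z κ, f z κ ≤ M := fun z κ => le_trans (hff' z κ) (hf'M z κ)
  have hb' : (0:ℝ) ≤ b + (db:ℝ) := by positivity
  have hMp : (0:ℝ) ≤ M * p⁻¹ := le_trans (inner_nonneg hp hp1 hb (f 0) (hf0 0))
    (inner_le hp hp1 hb (f 0) (hf0 0) (hfM 0))
  -- the outer integrand bounds
  have hout_nonneg : ∀ (c : ℝ), 0 ≤ c → ∀ (g : ℕ → ℕ → ℝ), (∀ z κ, 0 ≤ g z κ) →
      ∀ z, 0 ≤ NB a p z * ∑' κ, NB c p κ * g z κ := fun c hc g hg z =>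
    mul_nonneg (NB_nonneg ha.le hp hp1 z) (inner_nonneg hp hp1 hc (g z) (hg z))
  have hout_summable : ∀ (a' c : ℝ), 0 ≤ a' → 0 ≤ c → ∀ (g : ℕ → ℕ → ℝ),
      (∀ z κ, 0 ≤ g z κ) → (∀ z κ, g z κ ≤ M) →
      Summable (fun z => NB a' p z * ∑' κ, NB c p κ * g z κ) := by
    intro a' c ha' hc g hg hgM
    apply Summable.of_nonneg_of_le
      (fun z => mul_nonneg (NB_nonneg ha' hp hp1 z) (inner_nonneg hp hp1 hc (g z) (hg z)))
      (fun z => mul_le_mul_of_nonneg_left (inner_le hp hp1 hc (g z) (hg z) (hgM z))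
        (NB_nonneg ha' hp hp1 z))
      ((NB_summable hp hp1 ha').mul_right (M * p⁻¹))
  -- Step 1 : f ≤ f'
  have step1 : (∑' z, NB a p z * ∑' κ, NB b p κ * f z κ)
      ≤ ∑' z, NB a p z * ∑' κ, NB b p κ * f' z κ := by
    apply Summable.tsum_le_tsum ?_ (hout_summable a b ha.le hb f hf0 hfM)
      (hout_summable a b ha.le hb f' hf'0 hf'M)
    intro z
    apply mul_le_mul_of_nonneg_left ?_ (NB_nonneg ha.le hp hp1 z)
    apply Summable.tsum_le_tsum ?_ (inner_summable hp hp1 hb (f z) (hf0 z) (hfM z))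
      (inner_summable hp hp1 hb (f' z) (hf'0 z) (hf'M z))
    intro κ
    exact mul_le_mul_of_nonneg_left (hff' z κ) (NB_nonneg hb hp hp1 κ)
  -- Step 2 : increase inner shape
  have step2 : (∑' z, NB a p z * ∑' κ, NB b p κ * f' z κ)
      ≤ ∑' z, NB a p z * ∑' κ, NB (b + (db:ℝ)) p κ * f' z κ := by
    apply Summable.tsum_le_tsum ?_ (hout_summable a b ha.le hb f' hf'0 hf'M)
      (hout_summable a (b + (db:ℝ)) ha.le hb' f' hf'0 hf'M)
    intro z
    apply mul_le_mul_of_nonneg_left ?_ (NB_nonneg ha.le hp hp1 z)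
    rcases eq_or_lt_of_le hb with h0 | hbpos
    · rw [hbdb h0.symm]
      norm_num
    · exact NB_dominance hp hp1 hbpos db (f' z) (hf'0 z) (hf'M z)
        (fun i j hij => hmono z z i j le_rfl hij)
  -- Step 3 : increase outer shape
  have step3 : (∑' z, NB a p z * ∑' κ, NB (b + (db:ℝ)) p κ * f' z κ)
      ≤ ∑' z, NB (a + (da:ℝ)) p z * ∑' κ, NB (b + (db:ℝ)) p κ * f' z κ := by
    apply NB_dominance hp hp1 ha da (M := M * p⁻¹)
      (fun z => ∑' κ, NB (b + (db:ℝ)) p κ * f' z κ)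
      (fun z => inner_nonneg hp hp1 hb' (f' z) (hf'0 z))
      (fun z => inner_le hp hp1 hb' (f' z) (hf'0 z) (hf'M z))
    intro i j hij
    apply Summable.tsum_le_tsum ?_ (inner_summable hp hp1 hb' (f' i) (hf'0 i) (hf'M i))
      (inner_summable hp hp1 hb' (f' j) (hf'0 j) (hf'M j))
    intro κ
    exact mul_le_mul_of_nonneg_left (hmono i j κ κ hij le_rfl) (NB_nonneg hb' hp hp1 κ)
  exact le_trans step1 (le_trans step2 step3)

lemma pt_pos {β0 : ℝ} (hβ0 : 0 < β0) (N t : ℕ) : 0 < pt β0 N t := by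
  apply div_pos <;> positivity

lemma pt_lt_one {β0 : ℝ} (hβ0 : 0 < β0) (N t : ℕ) : pt β0 N t < 1 := by
  rw [pt, div_lt_one (by positivity)]
  linarith

lemma EZK_eq (α0 β0 : ℝ) (N t k : ℕ) (f : ℕ → ℕ → ℝ) :
    EZK α0 β0 N t k f = ∑' z, NB (α0 + (k:ℝ)) (pt β0 N t) z *
      ∑' κ, NB (((N:ℝ) - 1) * (α0 + (k:ℝ))) (pt β0 N t) κ * f z κ := by
  rw [EZK]
  apply tsum_congr
  intro z
  simp_rw [mul_assoc]
  rw [tsum_mul_left]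


/-- The single-system value function is non-decreasing in the pooled data `k`. -/
theorem value_monotone_k
    (α0 β0 : ℝ) (hα0 : 0 < α0) (hβ0 : 0 < β0)
    (N T : ℕ) (hN : 1 ≤ N) (hT : 1 ≤ T)
    (ξ : ℕ) (hξ : 1 ≤ ξ)
    (cp cu : ℝ) (hcp : 0 < cp) (hcpcu : cp < cu)
    (V : ℕ → ℕ → ℕ → ℝ)
    (hVT : ∀ x k, V T x k = if ξ ≤ x then cu else 0)
    (hVfail : ∀ t, t < T → ∀ x k, ξ ≤ x →
      V t x k = cu + EZK α0 β0 N t k (fun z κ => V (t + 1) z (k + z + κ)))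
    (hVop : ∀ t, t < T → ∀ x k, x < ξ →
      V t x k =
        min (cp + EZK α0 β0 N t k (fun z κ => V (t + 1) z (k + z + κ)))
          (EZK α0 β0 N t k (fun z κ => V (t + 1) (x + z) (k + z + κ)))) :
    ∀ t ≤ T, ∀ (x : ℕ) (k k' : ℕ), k ≤ k' → V t x k ≤ V t x k' := by
  have hcu : 0 < cu := lt_trans hcp hcpcu
  suffices H : ∀ d t, T = t + d → ∃ M, (∀ x k, 0 ≤ V t x k ∧ V t x k ≤ M) ∧
      (∀ x x' k k', x ≤ x' → k ≤ k' → V t x k ≤ V t x' k') by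
    intro t ht x k k' hkk'
    obtain ⟨M, _, hmono⟩ := H (T - t) t (by omega)
    exact hmono x x k k' le_rfl hkk'
  intro d
  induction d with
  | zero =>
      intro t hTt
      have ht : t = T := by omega
      subst ht
      refine ⟨cu, ?_, ?_⟩
      · intro x k
        rw [hVT]
        split <;> constructor <;> linarith
      · intro x x' k k' hxx' hkk'
        rw [hVT, hVT]
        split_ifs with h1 h2 h2
        · exact le_rfl
        · exact absurd (le_trans h1 hxx') h2
        · linarith
        · exact le_rfl
  | succ d ih =>
      intro t hTt
      have htT : t < T := by omega
      obtain ⟨M, hbound, hmono⟩ := ih (t + 1) (by omega)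
      have hM0 : 0 ≤ M := le_trans (hbound 0 0).1 (hbound 0 0).2
      set p := pt β0 N t with hp_def
      have hp : 0 < p := pt_pos hβ0 N t
      have hp1 : p < 1 := pt_lt_one hβ0 N t
      have hpinv1 : (1:ℝ) ≤ p⁻¹ := by
        rw [le_inv_comm₀ one_pos hp]; simpa using hp1.le
      have ha : ∀ k : ℕ, (0:ℝ) < α0 + k := fun k => by positivity
      have hb : ∀ k : ℕ, (0:ℝ) ≤ ((N:ℝ) - 1) * (α0 + k) := by
        intro k
        have h1 : (1:ℝ) ≤ (N:ℝ) := by exact_mod_cast hN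
        exact mul_nonneg (by linarith) (ha k).le
      -- key monotonicity of the expectation terms
      have keyB : ∀ x x' k k', x ≤ x' → k ≤ k' →
          EZK α0 β0 N t k (fun z κ => V (t+1) (x+z) (k+z+κ))
            ≤ EZK α0 β0 N t k' (fun z κ => V (t+1) (x'+z) (k'+z+κ)) := by
        intro x x' k k' hxx' hkk'
        rw [EZK_eq, EZK_eq]
        have e1 : α0 + (k':ℝ) = (α0 + (k:ℝ)) + (((k'-k : ℕ)):ℝ) := by
          rw [Nat.cast_sub hkk']; ring
        have e2 : ((N:ℝ) - 1) * (α0 + (k':ℝ))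
            = ((N:ℝ) - 1) * (α0 + (k:ℝ)) + ((((N-1)*(k'-k) : ℕ)):ℝ) := by
          rw [Nat.cast_mul, Nat.cast_sub hkk', Nat.cast_sub hN]
          push_cast
          ring
        rw [e2, e1]
        apply NB_dominance2 hp hp1 (ha k) (hb k) (k'-k) ((N-1)*(k'-k)) ?_ (M := M)
        · intro z κ; exact (hbound _ _).1
        · intro z κ
          exact hmono (x+z) (x'+z) (k+z+κ) (k'+z+κ) (by omega) (by omega)
        · intro z κ; exact (hbound _ _).1
        · intro z κ; exact (hbound _ _).2
        · intro z z' κ κ' hz hκ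
          exact hmono (x'+z) (x'+z') (k'+z+κ) (k'+z'+κ') (by omega) (by omega)
        · -- b = 0 → db = 0
          intro h0
          have hzero : (N:ℝ) - 1 = 0 := by
            rcases mul_eq_zero.mp h0 with h | h
            · exact h
            · exact absurd h (ha k).ne'
          have : (N:ℝ) = 1 := by linarith
          have hN1 : N = 1 := by exact_mod_cast this
          subst hN1
          simp
      have keyA : ∀ k k', k ≤ k' →
          EZK α0 β0 N t k (fun z κ => V (t+1) z (k+z+κ))
            ≤ EZK α0 β0 N t k' (fun z κ => V (t+1) z (k'+z+κ)) := by
        intro k k' hkk'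
        have := keyB 0 0 k k' le_rfl hkk'
        simpa using this
      -- bounds on the expectation terms
      have hE : ∀ k (f : ℕ → ℕ → ℝ), (∀ z κ, 0 ≤ f z κ) → (∀ z κ, f z κ ≤ M) →
          0 ≤ EZK α0 β0 N t k f ∧ EZK α0 β0 N t k f ≤ M * p⁻¹ * p⁻¹ := by
        intro k f hf0 hfM
        rw [EZK_eq]
        constructor
        · apply tsum_nonneg
          intro z
          exact mul_nonneg (NB_nonneg (ha k).le hp hp1 z)
            (inner_nonneg hp hp1 (hb k) (f z) (hf0 z))
        · have hMp : (0:ℝ) ≤ M * p⁻¹ := mul_nonneg hM0 (by positivity)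
          calc (∑' z, NB (α0 + (k:ℝ)) p z * ∑' κ, NB (((N:ℝ)-1)*(α0+(k:ℝ))) p κ * f z κ)
              ≤ ∑' z, NB (α0 + (k:ℝ)) p z * (M * p⁻¹) := by
                apply Summable.tsum_le_tsum ?_ ?_ ((NB_summable hp hp1 (ha k).le).mul_right (M * p⁻¹))
                · intro z
                  exact mul_le_mul_of_nonneg_left
                    (inner_le hp hp1 (hb k) (f z) (hf0 z) (hfM z))
                    (NB_nonneg (ha k).le hp hp1 z)
                · apply Summable.of_nonneg_of_le
                    (fun z => mul_nonneg (NB_nonneg (ha k).le hp hp1 z)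
                      (inner_nonneg hp hp1 (hb k) (f z) (hf0 z)))
                    (fun z => mul_le_mul_of_nonneg_left
                      (inner_le hp hp1 (hb k) (f z) (hf0 z) (hfM z))
                      (NB_nonneg (ha k).le hp hp1 z))
                    ((NB_summable hp hp1 (ha k).le).mul_right (M * p⁻¹))
            _ = (∑' z, NB (α0 + (k:ℝ)) p z) * (M * p⁻¹) := tsum_mul_right
            _ ≤ p⁻¹ * (M * p⁻¹) :=
                mul_le_mul_of_nonneg_right (NB_mass_le' hp hp1 (ha k).le) hMp
            _ = M * p⁻¹ * p⁻¹ := by ring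
      have hWb : ∀ (x0 k0 : ℕ), (∀ z κ, 0 ≤ V (t+1) (x0+z) (k0+z+κ)) ∧
          (∀ z κ, V (t+1) (x0+z) (k0+z+κ) ≤ M) :=
        fun x0 k0 => ⟨fun z κ => (hbound _ _).1, fun z κ => (hbound _ _).2⟩
      have hEfail : ∀ k, 0 ≤ EZK α0 β0 N t k (fun z κ => V (t+1) z (k+z+κ)) ∧
          EZK α0 β0 N t k (fun z κ => V (t+1) z (k+z+κ)) ≤ M * p⁻¹ * p⁻¹ :=
        fun k => hE k _ (fun z κ => (hbound _ _).1) (fun z κ => (hbound _ _).2)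
      have hEop : ∀ x k, 0 ≤ EZK α0 β0 N t k (fun z κ => V (t+1) (x+z) (k+z+κ)) ∧
          EZK α0 β0 N t k (fun z κ => V (t+1) (x+z) (k+z+κ)) ≤ M * p⁻¹ * p⁻¹ :=
        fun x k => hE k _ (fun z κ => (hbound _ _).1) (fun z κ => (hbound _ _).2)
      refine ⟨cu + M * p⁻¹ * p⁻¹, ?_, ?_⟩
      · intro x k
        by_cases hx : ξ ≤ x
        · rw [hVfail t htT x k hx]
          constructor
          · have := (hEfail k).1; linarith
          · have := (hEfail k).2; linarith
        · rw [hVop t htT x k (by omega)]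
          constructor
          · apply le_min
            · have := (hEfail k).1; linarith
            · exact (hEop x k).1
          · apply le_trans (min_le_left _ _)
            have := (hEfail k).2; linarith
      · intro x x' k k' hxx' hkk'
        by_cases hx : ξ ≤ x
        · have hx' : ξ ≤ x' := le_trans hx hxx'
          rw [hVfail t htT x k hx, hVfail t htT x' k' hx']
          have := keyA k k' hkk'
          linarith
        · by_cases hx' : ξ ≤ x'
          · rw [hVop t htT x k (by omega), hVfail t htT x' k' hx']
            apply le_trans (min_le_left _ _)
            have := keyA k k' hkk'
            linarith
          · rw [hVop t htT x k (by omega), hVop t htT x' k' (by omega)]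
            apply min_le_min
            · have := keyA k k' hkk'
              linarith
            · exact keyB x x' k k' hxx' hkk'
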